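/- Let Y₀, Y₁ be Polish spaces, c and c_n (n ∈ ω) continuous open partial functions from Y₀ into Y₁ with open domains, and set C^ε := ⋃_n Gr(c_{2n+ε}) for ε ∈ 2. Assume C⁰ is disjoint from C¹ ∪ Gr(c) and ∅ ≠ Gr(c) ⊆ closure(C⁰) ∩ closure(C¹). Then C⁰ is not separable from Gr(c) by a potentially closed set. -/

import Mathlib

open Filter Set TopologicalSpace Topology

/-- Baire-category point-finding lemma: for a continuous open partial map `g` with open
domain `d`, any nonempty open `W ⊆ d` contains a point of `G0` mapped into `G1`,
whenever `G0`, `G1` are comeager. -/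
lemma key_baire {Y0 Y1 : Type*} [TopologicalSpace Y0] [PolishSpace Y0] [TopologicalSpace Y1]
    (d : Set Y0) (g : Y0 → Y1) (hd : IsOpen d) (hg : ContinuousOn g d)
    (hgo : ∀ U ⊆ d, IsOpen U → IsOpen (g '' U))
    {G0 : Set Y0} {G1 : Set Y1} (hG0 : G0 ∈ residual Y0) (hG1 : G1 ∈ residual Y1)
    {W : Set Y0} (hW : IsOpen W) (hWd : W ⊆ d) {x : Y0} (hx : x ∈ W) :
    ∃ a ∈ W, a ∈ G0 ∧ g a ∈ G1 := by
  letI := upgradeIsCompletelyMetrizable Y0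
  obtain ⟨S, hSopen, hSdense, hScount, hTG1⟩ := mem_residual_iff.1 hG1
  set B : Set Y1 → Set Y0 := fun t => (d ∩ g ⁻¹' t) ∪ (closure d)ᶜ with hB
  have hBres : ∀ t ∈ S, B t ∈ residual Y0 := by
    intro t ht
    refine residual_of_dense_open ?_ ?_
    · exact ((hg.isOpen_inter_preimage hd (hSopen t ht)).union isClosed_closure.isOpen_compl)
    · intro z
      rw [mem_closure_iff]
      intro O hO hzO
      by_cases hOd : (O ∩ d).Nonempty
      · obtain ⟨w, hwO, hwd⟩ := hOd
        have himg : IsOpen (g '' (O ∩ d)) := hgo _ inter_subset_right (hO.inter hd)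
        have himgne : (g '' (O ∩ d)).Nonempty := ⟨g w, w, ⟨hwO, hwd⟩, rfl⟩
        obtain ⟨y, hy1, hy2⟩ := (hSdense t ht).inter_open_nonempty _ himg himgne
        obtain ⟨a, ⟨haO, had⟩, rfl⟩ := hy1
        exact ⟨a, haO, Or.inl ⟨had, hy2⟩⟩
      · refine ⟨z, hzO, Or.inr fun hzc => ?_⟩
        obtain ⟨w, hw1, hw2⟩ := mem_closure_iff.1 hzc O hO hzO
        exact hOd ⟨w, hw1, hw2⟩
  have hR : G0 ∩ ⋂ t ∈ S, B t ∈ residual Y0 :=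
    inter_mem hG0 ((countable_bInter_mem hScount).2 hBres)
  have hdense := dense_of_mem_residual hR
  obtain ⟨a, haW, haG0, haB⟩ : ∃ a, a ∈ W ∧ a ∈ G0 ∧ a ∈ ⋂ t ∈ S, B t := by
    obtain ⟨a, ha1, ha2, ha3⟩ := hdense.inter_open_nonempty W hW ⟨x, hx⟩
    exact ⟨a, ha1, ha2, ha3⟩
  refine ⟨a, haW, haG0, hTG1 ?_⟩
  rw [mem_sInter]
  intro t ht
  have := mem_iInter₂.1 haB t ht
  rcases this with h | h
  · exact h.2
  · exact absurd (subset_closure (hWd haW)) h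

open Filter Set TopologicalSpace Topology

/-- A finer Polish topology agrees with the original one on a comeager set, in the sense that
`t0`-open sets are locally traces of original-open sets there. -/
lemma agree_on_residual {Y : Type*} [τ : TopologicalSpace Y] [hτpol : PolishSpace Y]
    (t0 : TopologicalSpace Y) (hle : t0 ≤ τ) (hpol : @PolishSpace Y t0) :
    ∃ G ∈ @residual Y τ, ∀ U, IsOpen[t0] U → ∀ a ∈ U, a ∈ G →
      ∃ U', IsOpen[τ] U' ∧ a ∈ U' ∧ U' ∩ G ⊆ U := by
  obtain ⟨b, hbcount, -, hbbasis⟩ :=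
    @TopologicalSpace.exists_countable_basis Y t0 hpol.toSecondCountableTopology
  have hchoice : ∀ s ∈ b, ∃ u : Set Y, IsOpen[τ] u ∧ s =ᶠ[@residual Y τ] u := by
    intro s hs
    have h1 : @MeasurableSet Y (@borel Y t0) s :=
      MeasurableSpace.measurableSet_generateFrom (hbbasis.isOpen hs)
    rw [MeasureTheory.borel_eq_borel_of_le hpol hτpol hle] at h1
    have h2 : @BaireMeasurableSet Y τ s :=
      @MeasurableSet.baireMeasurableSet Y τ s (@borel Y τ) (@BorelSpace.mk Y τ (@borel Y τ) rfl) h1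
    exact @BaireMeasurableSet.residualEq_isOpen Y τ s h2
  choose! v hvopen hveq using hchoice
  refine ⟨⋂ s ∈ b, {x | (x ∈ s) = (x ∈ v s)},
    (countable_bInter_mem hbcount).2 fun s hs => hveq s hs, ?_⟩
  intro U hU a haU haG
  obtain ⟨s, hsb, has, hsU⟩ := hbbasis.exists_subset_of_mem_open haU hU
  have haeq : (a ∈ s) = (a ∈ v s) := mem_iInter₂.1 haG s hsb
  refine ⟨v s, hvopen s hsb, haeq ▸ has, ?_⟩
  rintro x ⟨hxv, hxG⟩
  have : (x ∈ s) = (x ∈ v s) := mem_iInter₂.1 hxG s hsb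
  exact hsU (this ▸ hxv)

/-- `P ⊆ Y₀ × Y₁` is potentially closed: there are finer Polish topologies on the
factors making `P` closed in the product. -/
def PotClosed2 {Y0 Y1 : Type*} [tY0 : TopologicalSpace Y0] [tY1 : TopologicalSpace Y1]
    (P : Set (Y0 × Y1)) : Prop :=
  ∃ t0 : TopologicalSpace Y0, ∃ t1 : TopologicalSpace Y1,
    t0 ≤ tY0 ∧ t1 ≤ tY1 ∧ @PolishSpace Y0 t0 ∧ @PolishSpace Y1 t1 ∧
      @IsClosed (Y0 × Y1) (@instTopologicalSpaceProd Y0 Y1 t0 t1) P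

theorem aux_main {Y0 Y1 : Type*}
    [tY0 : TopologicalSpace Y0] [pY0 : PolishSpace Y0] [tY1 : TopologicalSpace Y1] [pY1 : PolishSpace Y1]
    (domc : Set Y0) (c : Y0 → Y1)
    (hdomc : IsOpen domc) (hccont : ContinuousOn c domc)
    (hcopen : ∀ U ⊆ domc, IsOpen U → IsOpen (c '' U))
    (dom : ℕ → Set Y0) (cn : ℕ → Y0 → Y1)
    (hdom : ∀ n, IsOpen (dom n)) (hcncont : ∀ n, ContinuousOn (cn n) (dom n))
    (hcnopen : ∀ n, ∀ U ⊆ dom n, IsOpen U → IsOpen (cn n '' U))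
    (Grc : Set (Y0 × Y1)) (hGrc : Grc = {p : Y0 × Y1 | p.1 ∈ domc ∧ p.2 = c p.1})
    (C0 C1 : Set (Y0 × Y1))
    (hC0 : C0 = ⋃ n, {p : Y0 × Y1 | p.1 ∈ dom (2 * n) ∧ p.2 = cn (2 * n) p.1})
    (hC1 : C1 = ⋃ n, {p : Y0 × Y1 | p.1 ∈ dom (2 * n + 1) ∧ p.2 = cn (2 * n + 1) p.1})
    (hdisj : Disjoint C0 (C1 ∪ Grc)) (hne : Grc.Nonempty)
    (hsub : Grc ⊆ closure C0 ∩ closure C1) :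
    ¬ ∃ P : Set (Y0 × Y1), PotClosed2 P ∧ C0 ⊆ P ∧ Disjoint P Grc := by
  rintro ⟨P, ⟨t0, t1, hle0, hle1, hpol0, hpol1, hPclosed⟩, hC0P, hPG⟩
  obtain ⟨G0, hG0res, hG0⟩ := @agree_on_residual Y0 tY0 pY0 t0 hle0 hpol0
  obtain ⟨G1, hG1res, hG1⟩ := @agree_on_residual Y1 tY1 pY1 t1 hle1 hpol1
  -- find a point of `Grc` whose coordinates lie in the comeager sets `G0`, `G1`
  obtain ⟨⟨x, y⟩, hxy⟩ := hne
  rw [hGrc] at hxy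
  obtain ⟨a0, ha0dom, ha0G0, ha0G1⟩ :=
    @key_baire Y0 Y1 tY0 pY0 tY1 domc c hdomc hccont hcopen _ _ hG0res hG1res _ hdomc (subset_refl _) _ hxy.1
  have hzGrc : (a0, c a0) ∈ Grc := by rw [hGrc]; exact ⟨ha0dom, rfl⟩
  have hzP : (a0, c a0) ∈ P := by
    by_contra hzP
    have hPc : IsOpen[@instTopologicalSpaceProd Y0 Y1 t0 t1] Pᶜ := hPclosed.isOpen_compl
    obtain ⟨U, V, hU, hV, hzU, hzV, hUV⟩ :=
      (@isOpen_prod_iff Y0 Y1 t0 t1 Pᶜ).1 hPc a0 (c a0) hzP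
    obtain ⟨U', hU'open, haU', hU'G⟩ := hG0 U hU a0 hzU ha0G0
    obtain ⟨V', hV'open, hbV', hV'G⟩ := hG1 V hV (c a0) hzV ha0G1
    have hzcl : (a0, c a0) ∈ @closure _ (@instTopologicalSpaceProd Y0 Y1 tY0 tY1) C0 := (hsub hzGrc).1
    have hUV'ne : ((U' ×ˢ V') ∩ C0).Nonempty :=
      (@mem_closure_iff (Y0 × Y1) (@instTopologicalSpaceProd Y0 Y1 tY0 tY1) (a0, c a0) C0).1
        hzcl (U' ×ˢ V') (@IsOpen.prod _ _ tY0 tY1 _ _ hU'open hV'open) ⟨haU', hbV'⟩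
    obtain ⟨p, hpUV, hpC0⟩ := hUV'ne
    rw [hC0] at hpC0
    obtain ⟨n, hpdom, hpval⟩ : ∃ n, p.1 ∈ dom (2 * n) ∧ p.2 = cn (2 * n) p.1 := by
      simpa using hpC0
    have hWopen : IsOpen[tY0] (U' ∩ (dom (2 * n) ∩ cn (2 * n) ⁻¹' V')) :=
      @IsOpen.inter Y0 tY0 _ _ hU'open (@ContinuousOn.isOpen_inter_preimage Y0 Y1 tY0 tY1 _ _ _ (hcncont _) (hdom _) hV'open)
    have hpW : p.1 ∈ U' ∩ (dom (2 * n) ∩ cn (2 * n) ⁻¹' V') :=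
      ⟨hpUV.1, hpdom, Set.mem_preimage.2 (hpval ▸ hpUV.2)⟩
    obtain ⟨a, ⟨haU'2, hadom2, haV'2⟩, haG0', haG1'⟩ :=
      @key_baire Y0 Y1 tY0 pY0 tY1 (dom (2 * n)) (cn (2 * n)) (hdom _) (hcncont _) (hcnopen _) _ _ hG0res hG1res
        _ hWopen (fun _ h => h.2.1) _ hpW
    have hp'C0 : (a, cn (2 * n) a) ∈ C0 := by
      rw [hC0]; exact Set.mem_iUnion.2 ⟨n, hadom2, rfl⟩
    have hp'UV : (a, cn (2 * n) a) ∈ U ×ˢ V :=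
      ⟨hU'G ⟨haU'2, haG0'⟩, hV'G ⟨haV'2, haG1'⟩⟩
    exact hUV hp'UV (hC0P hp'C0)
  exact Set.disjoint_left.1 hPG hzP hzGrc

theorem not_separable_by_potentially_closed {Y0 Y1 : Type*}
    [TopologicalSpace Y0] [PolishSpace Y0] [TopologicalSpace Y1] [PolishSpace Y1]
    (domc : Set Y0) (c : Y0 → Y1)
    (hdomc : IsOpen domc) (hccont : ContinuousOn c domc)
    (hcopen : ∀ U ⊆ domc, IsOpen U → IsOpen (c '' U))
    (dom : ℕ → Set Y0) (cn : ℕ → Y0 → Y1)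
    (hdom : ∀ n, IsOpen (dom n)) (hcncont : ∀ n, ContinuousOn (cn n) (dom n))
    (hcnopen : ∀ n, ∀ U ⊆ dom n, IsOpen U → IsOpen (cn n '' U))
    (Grc : Set (Y0 × Y1)) (hGrc : Grc = {p : Y0 × Y1 | p.1 ∈ domc ∧ p.2 = c p.1})
    (C0 C1 : Set (Y0 × Y1))
    (hC0 : C0 = ⋃ n, {p : Y0 × Y1 | p.1 ∈ dom (2 * n) ∧ p.2 = cn (2 * n) p.1})
    (hC1 : C1 = ⋃ n, {p : Y0 × Y1 | p.1 ∈ dom (2 * n + 1) ∧ p.2 = cn (2 * n + 1) p.1})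
    (hdisj : Disjoint C0 (C1 ∪ Grc)) (hne : Grc.Nonempty)
    (hsub : Grc ⊆ closure C0 ∩ closure C1) :
    ¬ ∃ P : Set (Y0 × Y1), PotClosed2 P ∧ C0 ⊆ P ∧ Disjoint P Grc :=
  aux_main domc c hdomc hccont hcopen dom cn hdom hcncont hcnopen Grc hGrc C0 C1 hC0 hC1 hdisj hne hsub
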